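/- Let T : ℝ² → ℝ² be continuous, and suppose there exist finitely many closed convex cones σ₁,…,σ_k ⊆ ℝ² with σ₁ ∪ ⋯ ∪ σ_k = ℝ² and 2×2 matrices A₁,…,A_k with integer entries such that T(x) = A_i x for all x ∈ σ_i and all i. Let K = { v ∈ ℝ² : ‖v‖ = 1 and T(v) = λ v for some real λ > 0 } be the set of fixed directions of T. If C is a connected component of K containing more than one point, and v ∈ C lies in the closure of {w ∈ ℝ² : ‖w‖ = 1} \ K, then v is rational: v = t·m for some real t > 0 and some nonzero m ∈ ℤ². -/

import Mathlib

open Filter Topology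

/-- The plane `ℝ²` with its Euclidean norm. -/
abbrev E2 := EuclideanSpace ℝ (Fin 2)

/-- Action of an integer `2×2` matrix on `ℝ²`. -/
noncomputable def intAct (M : Matrix (Fin 2) (Fin 2) ℤ) (v : E2) : E2 :=
  WithLp.toLp 2 ((M.map (fun n : ℤ => (n : ℝ))).mulVec v)

/-- The set of fixed directions of `T`: unit vectors sent to positive multiples
of themselves. -/
def fixedDirs (T : E2 → E2) : Set E2 :=
  {v : E2 | ‖v‖ = 1 ∧ ∃ l : ℝ, 0 < l ∧ T v = l • v}

lemma normsq_coords (u : E2) : u 0 ^ 2 + u 1 ^ 2 = ‖u‖ ^ 2 := by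
  rw [EuclideanSpace.norm_eq, Real.sq_sqrt (by positivity)]
  simp [Fin.sum_univ_two, Real.norm_eq_abs, sq_abs]

/-- Two close distinct unit vectors are non-parallel. -/
lemma cross_ne_zero (u w : E2) (hu : ‖u‖ = 1) (hw : ‖w‖ = 1) (hne : u ≠ w)
    (hclose : ‖u - w‖ < 1) : u 0 * w 1 - u 1 * w 0 ≠ 0 := by
  intro hc
  have h1 : u 0 ^ 2 + u 1 ^ 2 = 1 := by rw [normsq_coords, hu]; norm_num
  have h2 : w 0 ^ 2 + w 1 ^ 2 = 1 := by rw [normsq_coords, hw]; norm_num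
  have h3 : (u 0 - w 0) ^ 2 + (u 1 - w 1) ^ 2 < 1 := by
    have := normsq_coords (u - w)
    simp only [PiLp.sub_apply] at this
    rw [this]
    nlinarith [norm_nonneg (u - w)]
  set s := u 0 * w 0 + u 1 * w 1 with hs
  have hgt : 1/2 < s := by nlinarith
  have hs2 : (s - 1) * (s + 1) = 0 := by
    linear_combination (w 0 ^ 2 + w 1 ^ 2) * h1 + h2 - (u 0 * w 1 - u 1 * w 0) * hc
  have hs1 : s = 1 := by
    rcases mul_eq_zero.mp hs2 with h | h
    · linarith
    · linarith
  have hz : (u 0 - w 0) ^ 2 + (u 1 - w 1) ^ 2 = 0 := by linear_combination h1 + h2 - 2 * hs1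
  have e0 : u 0 = w 0 := by nlinarith [sq_nonneg (u 0 - w 0), sq_nonneg (u 1 - w 1)]
  have e1 : u 1 = w 1 := by nlinarith [sq_nonneg (u 0 - w 0), sq_nonneg (u 1 - w 1)]
  exact hne (by ext i; fin_cases i <;> assumption)

/-- A 2×2 matrix with three pairwise non-parallel eigendirections is scalar. -/
lemma rigid (B : Matrix (Fin 2) (Fin 2) ℝ) (u w z : E2) (α β γ : ℝ)
    (hu : (WithLp.toLp 2 (B.mulVec u) : E2) = α • u) (hw : (WithLp.toLp 2 (B.mulVec w) : E2) = β • w)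
    (hz : (WithLp.toLp 2 (B.mulVec z) : E2) = γ • z)
    (huw : u 0 * w 1 - u 1 * w 0 ≠ 0) (huz : u 0 * z 1 - u 1 * z 0 ≠ 0)
    (hwz : w 0 * z 1 - w 1 * z 0 ≠ 0) : B = α • 1 := by
  have coord : ∀ (x : E2) (c : ℝ), (WithLp.toLp 2 (B.mulVec x) : E2) = c • x →
      (B 0 0 * x 0 + B 0 1 * x 1 = c * x 0) ∧ (B 1 0 * x 0 + B 1 1 * x 1 = c * x 1) := by
    intro x c h
    constructor
    · have := congrArg (fun y => y 0) h
      simpa [Matrix.mulVec, dotProduct, Fin.sum_univ_two] using this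
    · have := congrArg (fun y => y 1) h
      simpa [Matrix.mulVec, dotProduct, Fin.sum_univ_two] using this
  obtain ⟨h1, h2⟩ := coord u α hu
  obtain ⟨h3, h4⟩ := coord w β hw
  obtain ⟨h5, h6⟩ := coord z γ hz
  have key : (β - α) * ((u 0 * z 1 - u 1 * z 0) * (w 0 * z 1 - w 1 * z 0)) = 0 := by
    linear_combination (-(z 0 * z 1 * w 1) + z 1 ^ 2 * w 0) * h1
      + (z 0 ^ 2 * w 1 - z 0 * z 1 * w 0) * h2
      + (z 0 * z 1 * u 1 - z 1 ^ 2 * u 0) * h3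
      + (-(z 0 ^ 2 * u 1) + z 0 * z 1 * u 0) * h4
      + (z 1 * (u 0 * w 1 - u 1 * w 0)) * h5
      + (-(z 0 * (u 0 * w 1 - u 1 * w 0))) * h6
  have hβα : β = α := by
    have := mul_ne_zero huz hwz
    rcases mul_eq_zero.mp key with h | h
    · linarith
    · exact absurd h this
  subst hβα
  have e00 : (B 0 0 - β) * (u 0 * w 1 - u 1 * w 0) = 0 := by linear_combination w 1 * h1 - u 1 * h3
  have e01 : B 0 1 * (u 0 * w 1 - u 1 * w 0) = 0 := by linear_combination u 0 * h3 - w 0 * h1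
  have e10 : B 1 0 * (u 0 * w 1 - u 1 * w 0) = 0 := by linear_combination w 1 * h2 - u 1 * h4
  have e11 : (B 1 1 - β) * (u 0 * w 1 - u 1 * w 0) = 0 := by linear_combination u 0 * h4 - w 0 * h2
  ext i j
  fin_cases i <;> fin_cases j <;>
    simp [Matrix.smul_apply, Matrix.one_apply] <;>
    [skip; exact (mul_eq_zero.mp e01).resolve_right huw;
     exact (mul_eq_zero.mp e10).resolve_right huw; skip]
  · have := (mul_eq_zero.mp e00).resolve_right huw; linarith
  · have := (mul_eq_zero.mp e11).resolve_right huw; linarith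

lemma rational_of_int_rel (a b : ℤ) (hab : ¬(a = 0 ∧ b = 0)) (v : E2) (hv : v ≠ 0)
    (h : (a : ℝ) * v 0 + (b : ℝ) * v 1 = 0) :
    ∃ t : ℝ, 0 < t ∧ ∃ m : Fin 2 → ℤ, m ≠ 0 ∧ v = t • (WithLp.toLp 2 (fun j => (m j : ℝ)) : E2) := by
  have hvc : ¬(v 0 = 0 ∧ v 1 = 0) := by
    rintro ⟨h0, h1⟩
    exact hv (by ext i; fin_cases i <;> simpa)
  obtain ⟨s, hs0, hv0, hv1⟩ : ∃ s : ℝ, s ≠ 0 ∧ v 0 = s * b ∧ v 1 = s * (-a) := by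
    by_cases hb : (b : ℝ) = 0
    · have ha : (a : ℝ) ≠ 0 := by
        intro ha
        exact hab ⟨by exact_mod_cast ha, by exact_mod_cast hb⟩
      have h0 : v 0 = 0 := by
        have : (a : ℝ) * v 0 = 0 := by rw [hb] at h; linarith
        exact (mul_eq_zero.mp this).resolve_left ha
      refine ⟨v 1 / (-a), ?_, ?_, by field_simp⟩
      · intro hs
        have h1 : v 1 = 0 := by
          rcases div_eq_zero_iff.mp hs with h' | h'
          · exact h'
          · exact absurd (neg_eq_zero.mp h') ha
        exact hvc ⟨h0, h1⟩
      · rw [h0, hb]; ring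
    · refine ⟨v 0 / b, ?_, by field_simp, ?_⟩
      · intro hs
        have h0 : v 0 = 0 := by
          rcases div_eq_zero_iff.mp hs with h' | h'
          · exact h'
          · exact absurd h' hb
        have h1 : v 1 = 0 := by
          rw [h0] at h
          have : (b : ℝ) * v 1 = 0 := by linarith
          exact (mul_eq_zero.mp this).resolve_left hb
        exact hvc ⟨h0, h1⟩
      · field_simp
        linear_combination h
  rcases lt_or_gt_of_ne hs0 with hneg | hpos
  · refine ⟨-s, by linarith, ![-b, a], ?_, ?_⟩
    · intro hm
      have e0 := congrFun hm 0
      have e1 := congrFun hm 1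
      simp at e0 e1
      exact hab ⟨e1, e0⟩
    · ext i
      fin_cases i <;> simp [hv0, hv1]
  · refine ⟨s, hpos, ![b, -a], ?_, ?_⟩
    · intro hm
      have e0 := congrFun hm 0
      have e1 := congrFun hm 1
      simp at e0 e1
      exact hab ⟨e1, e0⟩
    · ext i
      fin_cases i <;> simp [hv0, hv1]

theorem endpoints_of_fixed_arcs_are_rational
    (T : E2 → E2) (hTc : Continuous T)
    (k : ℕ) (σ : Fin k → Set E2) (A : Fin k → Matrix (Fin 2) (Fin 2) ℤ)
    (hclosed : ∀ i, IsClosed (σ i)) (hconv : ∀ i, Convex ℝ (σ i))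
    (hcone : ∀ i, ∀ x ∈ σ i, ∀ r : ℝ, 0 < r → r • x ∈ σ i)
    (hcover : (⋃ i, σ i) = Set.univ)
    (hpiece : ∀ i, ∀ x ∈ σ i, T x = intAct (A i) x)
    (C : Set E2) (v : E2) (hv : v ∈ fixedDirs T)
    (hC : C = connectedComponentIn (fixedDirs T) v)
    (hbig : ¬ C.Subsingleton)
    (hcl : v ∈ closure ({w : E2 | ‖w‖ = 1} \ fixedDirs T)) :
    ∃ t : ℝ, 0 < t ∧ ∃ m : Fin 2 → ℤ, m ≠ 0 ∧ v = t • (WithLp.toLp 2 (fun j => (m j : ℝ)) : E2) := by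
  have hCsub : C ⊆ fixedDirs T := hC ▸ connectedComponentIn_subset _ _
  have hvC : v ∈ C := hC ▸ mem_connectedComponentIn hv
  obtain ⟨hv1, l, hl, hTv⟩ := hv
  have hvne0 : v ≠ 0 := by intro h; rw [h] at hv1; simp at hv1
  have mem_cone : ∀ x : E2, ∃ i, x ∈ σ i := by
    intro x
    have : x ∈ ⋃ i, σ i := hcover ▸ Set.mem_univ x
    exact Set.mem_iUnion.mp this
  -- helper: v lies in a cone that contains infinitely many terms of a sequence → v
  have mem_of_fiber : ∀ (φ : ℕ → E2) (ψ : ℕ → Fin k) (i : Fin k),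
      (∀ n, φ n ∈ σ (ψ n)) → (∀ n, ‖φ n - v‖ < 1/((n:ℝ)+1)) →
      (ψ ⁻¹' {i}).Infinite → v ∈ σ i := by
    intro φ ψ i hmem hlt hinf
    rw [← (hclosed i).closure_eq]
    apply Metric.mem_closure_iff.mpr
    intro ε hε
    obtain ⟨N, hN⟩ := exists_nat_one_div_lt hε
    obtain ⟨n, hnf, hn⟩ := hinf.exists_gt N
    refine ⟨φ n, ?_, ?_⟩
    · have hi : ψ n = i := hnf
      rw [← hi]; exact hmem n
    · rw [dist_eq_norm, norm_sub_rev]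
      calc ‖φ n - v‖ < 1/((n:ℝ)+1) := hlt n
        _ ≤ 1/((N:ℝ)+1) := by
            apply one_div_le_one_div_of_le (by positivity)
            push_cast
            have : (N:ℝ) ≤ n := by exact_mod_cast hn.le
            linarith
        _ < ε := hN
  -- points of C arbitrarily close to v
  obtain ⟨v', hv'C, hv'ne⟩ : ∃ v', v' ∈ C ∧ v' ≠ v := by
    by_contra hcon; push_neg at hcon
    exact hbig fun x hx y hy => (hcon x hx).trans (hcon y hy).symm
  have hpre : IsPreconnected C := hC ▸ isPreconnected_connectedComponentIn
  have key : ∀ ε : ℝ, 0 < ε → ∃ x, x ∈ C ∧ x ≠ v ∧ ‖x - v‖ < ε := by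
    intro ε hε
    by_contra hcon; push_neg at hcon
    have hres := hpre (Metric.ball v ε) ({v}ᶜ) Metric.isOpen_ball isOpen_compl_singleton
      (fun x hx => by
        by_cases hxv : x = v
        · left; rw [hxv]; exact Metric.mem_ball_self hε
        · right; exact hxv)
      ⟨v, hvC, Metric.mem_ball_self hε⟩ ⟨v', hv'C, hv'ne⟩
    obtain ⟨x, hxC, hx1, hx2⟩ := hres
    have hxv : x ≠ v := hx2
    have : ‖x - v‖ < ε := by rw [← dist_eq_norm]; exact Metric.mem_ball.mp hx1
    exact absurd this (not_lt.mpr (hcon x hxC hxv))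
  have hseq : ∀ n : ℕ, ∃ x, x ∈ C ∧ x ≠ v ∧ ‖x - v‖ < 1/((n:ℝ)+1) :=
    fun n => key _ (by positivity)
  choose w hwC hwne hwlt using hseq
  choose f hf using fun n => mem_cone (w n)
  obtain ⟨i, hifin⟩ := Finite.exists_infinite_fiber f
  have hifin' : (f ⁻¹' {i}).Infinite := Set.infinite_coe_iff.mp hifin
  have hvσi : v ∈ σ i := mem_of_fiber w f i hf hwlt hifin'
  obtain ⟨N₁, hN₁⟩ := exists_nat_one_div_lt (show (0:ℝ) < 1/4 by norm_num)
  obtain ⟨n₁, hn₁f, hn₁⟩ := hifin'.exists_gt N₁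
  have hw₁ : ‖w n₁ - v‖ < 1/4 := by
    calc ‖w n₁ - v‖ < 1/((n₁:ℝ)+1) := hwlt n₁
      _ ≤ 1/((N₁:ℝ)+1) := by
          apply one_div_le_one_div_of_le (by positivity)
          push_cast
          have : (N₁:ℝ) ≤ n₁ := by exact_mod_cast hn₁.le
          linarith
      _ < 1/4 := hN₁
  have hpos₁ : 0 < min (1/4 : ℝ) ‖w n₁ - v‖ :=
    lt_min (by norm_num) (norm_sub_pos_iff.mpr (hwne n₁))
  obtain ⟨N₂, hN₂⟩ := exists_nat_one_div_lt hpos₁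
  obtain ⟨n₂, hn₂f, hn₂⟩ := hifin'.exists_gt N₂
  have hw₂m : ‖w n₂ - v‖ < min (1/4 : ℝ) ‖w n₁ - v‖ := by
    calc ‖w n₂ - v‖ < 1/((n₂:ℝ)+1) := hwlt n₂
      _ ≤ 1/((N₂:ℝ)+1) := by
          apply one_div_le_one_div_of_le (by positivity)
          push_cast
          have : (N₂:ℝ) ≤ n₂ := by exact_mod_cast hn₂.le
          linarith
      _ < _ := hN₂
  have hw₂ : ‖w n₂ - v‖ < 1/4 := lt_of_lt_of_le hw₂m (min_le_left _ _)
  have hw₂₁ : ‖w n₂ - v‖ < ‖w n₁ - v‖ := lt_of_lt_of_le hw₂m (min_le_right _ _)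
  have hne12 : w n₁ ≠ w n₂ := by
    intro h; rw [← h] at hw₂₁; exact lt_irrefl _ hw₂₁
  have hx_mem : w n₁ ∈ σ i := by rw [← show f n₁ = i from hn₁f]; exact hf n₁
  have hy_mem : w n₂ ∈ σ i := by rw [← show f n₂ = i from hn₂f]; exact hf n₂
  obtain ⟨hx1, lx, hlx, hTx⟩ := hCsub (hwC n₁)
  obtain ⟨hy1, ly, hly, hTy⟩ := hCsub (hwC n₂)
  set B : Matrix (Fin 2) (Fin 2) ℝ := (A i).map (fun n : ℤ => (n : ℝ)) with hBdef
  have hBv : (WithLp.toLp 2 (B.mulVec v) : E2) = l • v := (hpiece i v hvσi).symm.trans hTv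
  have hBx : (WithLp.toLp 2 (B.mulVec (w n₁)) : E2) = lx • (w n₁) := (hpiece i _ hx_mem).symm.trans hTx
  have hBy : (WithLp.toLp 2 (B.mulVec (w n₂)) : E2) = ly • (w n₂) := (hpiece i _ hy_mem).symm.trans hTy
  have cvx : v 0 * (w n₁) 1 - v 1 * (w n₁) 0 ≠ 0 := by
    apply cross_ne_zero v (w n₁) hv1 hx1 (fun h => hwne n₁ h.symm)
    rw [norm_sub_rev]; linarith
  have cvy : v 0 * (w n₂) 1 - v 1 * (w n₂) 0 ≠ 0 := by
    apply cross_ne_zero v (w n₂) hv1 hy1 (fun h => hwne n₂ h.symm)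
    rw [norm_sub_rev]; linarith
  have cxy : (w n₁) 0 * (w n₂) 1 - (w n₁) 1 * (w n₂) 0 ≠ 0 := by
    apply cross_ne_zero _ _ hx1 hy1 hne12
    calc ‖w n₁ - w n₂‖ ≤ ‖w n₁ - v‖ + ‖v - w n₂‖ := norm_sub_le_norm_sub_add_norm_sub _ _ _
      _ < 1 := by rw [norm_sub_rev v]; linarith
  have hB : B = l • 1 := rigid B v (w n₁) (w n₂) l lx ly hBv hBx hBy cvx cvy cxy
  have hentry : ((A i 0 0 : ℤ) : ℝ) = l := by
    have := congrFun (congrFun hB 0) 0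
    simpa [hBdef, Matrix.map_apply, Matrix.smul_apply, Matrix.one_apply] using this
  -- the non-fixed side
  have hseq2 : ∀ n : ℕ, ∃ x, (‖x‖ = 1 ∧ x ∉ fixedDirs T) ∧ ‖x - v‖ < 1/((n:ℝ)+1) := by
    intro n
    obtain ⟨x, hx, hd⟩ := Metric.mem_closure_iff.mp hcl (1/((n:ℝ)+1)) (by positivity)
    exact ⟨x, hx, by rw [norm_sub_rev, ← dist_eq_norm]; exact hd⟩
  choose u hu hult using hseq2
  choose g hg using fun n => mem_cone (u n)
  obtain ⟨j, hjfin⟩ := Finite.exists_infinite_fiber g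
  have hjfin' : (g ⁻¹' {j}).Infinite := Set.infinite_coe_iff.mp hjfin
  have hvσj : v ∈ σ j := mem_of_fiber u g j hg hult hjfin'
  obtain ⟨n₃, hn₃f, -⟩ := hjfin'.exists_gt 0
  have hn₃ : u n₃ ∈ σ j := by rw [← show g n₃ = j from hn₃f]; exact hg n₃
  have hBjv : (WithLp.toLp 2 (((A j).map (fun n : ℤ => (n : ℝ))).mulVec v) : E2) = l • v :=
    (hpiece j v hvσj).symm.trans hTv
  have c0 : ((A j 0 0 : ℤ) : ℝ) * v 0 + ((A j 0 1 : ℤ) : ℝ) * v 1 = l * v 0 := by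
    have := congrArg (fun y => y 0) hBjv
    simpa [Matrix.mulVec, dotProduct, Fin.sum_univ_two, Matrix.map_apply] using this
  have c1 : ((A j 1 0 : ℤ) : ℝ) * v 0 + ((A j 1 1 : ℤ) : ℝ) * v 1 = l * v 1 := by
    have := congrArg (fun y => y 1) hBjv
    simpa [Matrix.mulVec, dotProduct, Fin.sum_univ_two, Matrix.map_apply] using this
  by_cases hrow : A j 0 0 = A i 0 0 ∧ A j 0 1 = 0
  · by_cases hrow2 : A j 1 0 = 0 ∧ A j 1 1 = A i 0 0
    · -- A j is scalar λ·I, contradicting non-fixedness of u n₃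
      exfalso
      obtain ⟨hun, hunf⟩ := hu n₃
      apply hunf
      refine ⟨hun, l, hl, ?_⟩
      rw [hpiece j _ hn₃]
      ext i0
      fin_cases i0
      · show (((A j).map (fun n : ℤ => (n : ℝ))).mulVec (u n₃)) 0 = (l • u n₃) 0
        simp [Matrix.mulVec, dotProduct, Fin.sum_univ_two, Matrix.map_apply,
          hrow.1, hrow.2, hentry]
      · show (((A j).map (fun n : ℤ => (n : ℝ))).mulVec (u n₃)) 1 = (l • u n₃) 1
        simp [Matrix.mulVec, dotProduct, Fin.sum_univ_two, Matrix.map_apply,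
          hrow2.1, hrow2.2, hentry]
    · -- row 1 of A j - λI is nonzero
      apply rational_of_int_rel (A j 1 0) (A j 1 1 - A i 0 0) ?_ v hvne0 ?_
      · intro ⟨ha, hb⟩
        exact hrow2 ⟨ha, by linarith [sub_eq_zero.mp hb]⟩
      · push_cast
        linear_combination c1 - v 1 * hentry
  · -- row 0 of A j - λI is nonzero
    apply rational_of_int_rel (A j 0 0 - A i 0 0) (A j 0 1) ?_ v hvne0 ?_
    · intro ⟨ha, hb⟩
      exact hrow ⟨by linarith [sub_eq_zero.mp ha], hb⟩
    · push_cast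
      linear_combination c0 - v 0 * hentry
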